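/- Define $S_r(n;q) = \sum_{k=1}^{n} [2k][k]^{2r} q^{(r+1)(n-k)} \binom{2n}{n+k}_q$. Then for all positive integers $n$ and $r$, $S_r(n;q) = [n]^2 S_{r-1}(n;q) - q^r [2n][2n-1] S_{r-1}(n-1;q)$ as polynomials in $q$. -/
import Mathlib


open Polynomial Finset

/-- The `q`-integer `[n] = 1 + q + ⋯ + q^(n-1)` as a polynomial in `ℤ[q]`. -/
noncomputable def qint (n : ℕ) : Polynomial ℤ := ∑ i ∈ Finset.range n, Polynomial.X ^ i

/-- The Gaussian binomial coefficient `[n choose k]_q` in `ℤ[q]`, via the `q`-Pascal rule. -/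
noncomputable def qbinom : ℕ → ℕ → Polynomial ℤ
  | _, 0 => 1
  | 0, _ + 1 => 0
  | n + 1, k + 1 => qbinom n k + Polynomial.X ^ (k + 1) * qbinom n (k + 1)

lemma qint_zero : qint 0 = 0 := by simp [qint]

lemma qint_succ (n : ℕ) : qint (n + 1) = qint n + X ^ n := by
  simp [qint, Finset.sum_range_succ]

lemma qint_add (a b : ℕ) : qint (a + b) = qint a + X ^ a * qint b := by
  induction b with
  | zero => simp [qint_zero]
  | succ b ih =>
      rw [← Nat.add_assoc, qint_succ, ih, qint_succ, pow_add]
      ring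

lemma qbinom_succ_succ (n k : ℕ) :
    qbinom (n + 1) (k + 1) = qbinom n k + X ^ (k + 1) * qbinom n (k + 1) := rfl

lemma qbinom_zero_right (n : ℕ) : qbinom n 0 = 1 := by cases n <;> rfl

lemma qbinom_eq_zero : ∀ n k, n < k → qbinom n k = 0
  | 0, _ + 1, _ => rfl
  | n + 1, k + 1, h => by
      rw [qbinom_succ_succ, qbinom_eq_zero n k (by omega),
        qbinom_eq_zero n (k + 1) (by omega)]
      ring

lemma qbinom_absorb (n : ℕ) :
    (∀ k, qint (k + 1) * qbinom (n + 1) (k + 1) = qint (n + 1) * qbinom n k) ∧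
    (∀ k, qint (n + 1 - k) * qbinom (n + 1) k = qint (n + 1) * qbinom n k) := by
  induction n with
  | zero =>
      constructor
      · intro k
        cases k with
        | zero => simp [qbinom_succ_succ, qbinom, qint_succ, qint_zero]
        | succ j =>
            rw [qbinom_succ_succ]
            simp [qbinom, qbinom_eq_zero 0 (j+1) (by omega),
              qbinom_eq_zero 0 (j+2) (by omega)]
      · intro k
        match k with
        | 0 => simp [qbinom_zero_right]
        | 1 => simp [qint_zero, qbinom_eq_zero 0 1 (by omega)]
        | j + 2 =>
            rw [qbinom_eq_zero 1 (j+2) (by omega), qbinom_eq_zero 0 (j+2) (by omega)]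
            ring
  | succ n ih =>
      obtain ⟨P, Q⟩ := ih
      constructor
      · intro k
        rw [qbinom_succ_succ (n+1) k, show n + 1 + 1 = n + 2 from rfl]
        have hp := P k
        have hq := Q k
        by_cases hk : k ≤ n + 1
        · have hadd : qint (n + 2) = qint (k + 1) + X ^ (k + 1) * qint (n + 1 - k) := by
            have h := qint_add (k + 1) (n + 1 - k)
            rw [show k + 1 + (n + 1 - k) = n + 2 from by omega] at h
            exact h
          linear_combination (X ^ (k+1)) * hp - (X ^ (k+1)) * hq
            - (qbinom (n+1) k) * hadd
        · rw [qbinom_eq_zero (n+1) k (by omega), qbinom_eq_zero (n+1) (k+1) (by omega)]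
          ring
      · intro k
        cases k with
        | zero => simp [qbinom_zero_right]
        | succ j =>
            rw [show n + 1 + 1 = n + 2 from rfl, qbinom_succ_succ (n+1) j]
            by_cases hj : j ≤ n
            · have hqj := Q j
              have hqj1 := Q (j + 1)
              rw [show n + 1 - (j + 1) = n - j from by omega] at hqj1
              rw [show n + 2 - (j + 1) = n + 1 - j from by omega]
              have hsplit : qint (n + 1 - j) = qint (n - j) + X ^ (n - j) := by
                have h := qint_succ (n - j)
                rw [show n - j + 1 = n + 1 - j from by omega] at h
                exact h
              have hN : qint (n + 2) = qint (n + 1) + X ^ (n + 1) := qint_succ (n + 1)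
              have hpas := qbinom_succ_succ n j
              have hexp : X ^ (j + 1) * X ^ (n - j) = (X : Polynomial ℤ) ^ (n + 1) := by
                rw [← pow_add, show j + 1 + (n - j) = n + 1 from by omega]
              linear_combination hqj + X ^ (j+1) * hqj1
                + (X ^ (j+1) * qbinom (n+1) (j+1)) * hsplit
                + (X ^ (j+1) * X ^ (n - j) - qint (n+2)) * hpas
                + (qbinom n j + X ^ (j+1) * qbinom n (j+1)) * hexp
                - (qbinom n j + X ^ (j+1) * qbinom n (j+1)) * hN
            · rw [show n + 2 - (j + 1) = 0 from by omega, qint_zero,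
                qbinom_eq_zero (n+1) (j+1) (by omega)]
              ring

/-- `[a+k]^2 = [a+2k][a] + q^a [k]^2`, i.e. `[n]^2 = [n+k][n-k] + q^(n-k)[k]^2`. -/
lemma key1 (a k : ℕ) :
    qint (a + k) ^ 2 = qint (a + 2 * k) * qint a + X ^ a * qint k ^ 2 := by
  have h1 : qint (a + k) = qint a + X ^ a * qint k := qint_add a k
  have h2 : qint (k + a) = qint k + X ^ k * qint a := qint_add k a
  have hc : qint a + X ^ a * qint k = qint k + X ^ k * qint a := by
    rw [← h1, ← h2, Nat.add_comm]
  have h3 : qint (a + 2 * k) = qint a + X ^ a * (qint k + X ^ k * qint k) := by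
    rw [show a + 2 * k = a + (k + k) from by ring, qint_add a (k + k), qint_add k k]
  rw [h1, h3]
  linear_combination (X ^ a * qint k) * hc

lemma key2 (n k : ℕ) (hk : 1 ≤ k) (hkn : k ≤ n) :
    qint (n + k) * qint (n - k) * qbinom (2 * n) (n + k)
      = qint (2 * n) * qint (2 * n - 1) * qbinom (2 * n - 2) (n + k - 1) := by
  obtain ⟨l, hl⟩ : ∃ l, 2 * n = l + 2 := ⟨2 * n - 2, by omega⟩
  obtain ⟨j, hj⟩ : ∃ j, n + k = j + 1 := ⟨n + k - 1, by omega⟩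
  have h1 := (qbinom_absorb (l + 1)).1 j
  have h2 := (qbinom_absorb l).2 j
  have e1 : n - k = l + 1 - j := by omega
  have e2 : 2 * n - 1 = l + 1 := by omega
  have e3 : 2 * n - 2 = l := by omega
  have e4 : n + k - 1 = j := by omega
  rw [e1, e2, e3, e4, hl, hj]
  calc qint (j + 1) * qint (l + 1 - j) * qbinom (l + 2) (j + 1)
      = qint (l + 1 - j) * (qint (j + 1) * qbinom (l + 1 + 1) (j + 1)) := by ring_nf
    _ = qint (l + 1 - j) * (qint (l + 1 + 1) * qbinom (l + 1) j) := by rw [h1]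
    _ = qint (l + 1 + 1) * (qint (l + 1 - j) * qbinom (l + 1) j) := by ring
    _ = qint (l + 1 + 1) * (qint (l + 1) * qbinom l j) := by rw [h2]
    _ = qint (l + 2) * qint (l + 1) * qbinom l j := by ring


/-- `S_r(n;q) = ∑_{k=1}^n [2k][k]^{2r} q^{(r+1)(n-k)} [2n choose n+k]_q`. -/
noncomputable def Spoly (r n : ℕ) : Polynomial ℤ :=
  ∑ k ∈ Finset.Icc 1 n,
    qint (2 * k) * (qint k) ^ (2 * r) * Polynomial.X ^ ((r + 1) * (n - k)) *
      qbinom (2 * n) (n + k)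

theorem stmt_2 (n r : ℕ) (hn : 0 < n) (hr : 0 < r) :
    Spoly r n = (qint n) ^ 2 * Spoly (r - 1) n
      - Polynomial.X ^ r * qint (2 * n) * qint (2 * n - 1) * Spoly (r - 1) (n - 1) := by
  obtain ⟨s, rfl⟩ : ∃ s, r = s + 1 := ⟨r - 1, by omega⟩
  obtain ⟨m, rfl⟩ : ∃ m, n = m + 1 := ⟨n - 1, by omega⟩
  simp only [Nat.add_sub_cancel]
  unfold Spoly
  have hext : (∑ k ∈ Finset.Icc 1 m,
        qint (2 * k) * (qint k) ^ (2 * s) * X ^ ((s + 1) * (m - k)) *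
          qbinom (2 * m) (m + k))
      = ∑ k ∈ Finset.Icc 1 (m + 1),
        qint (2 * k) * (qint k) ^ (2 * s) * X ^ ((s + 1) * (m - k)) *
          qbinom (2 * m) (m + k) := by
    apply Finset.sum_subset (Finset.Icc_subset_Icc_right (by omega))
    intro k hk hk'
    have hkm : k = m + 1 := by
      simp only [Finset.mem_Icc] at hk hk'
      omega
    subst hkm
    rw [qbinom_eq_zero (2 * m) (m + (m + 1)) (by omega)]
    ring
  rw [hext, Finset.mul_sum, Finset.mul_sum, ← Finset.sum_sub_distrib]
  apply Finset.sum_congr rfl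
  intro k hk
  rw [Finset.mem_Icc] at hk
  obtain ⟨hk1, hk2⟩ := hk
  by_cases hlt : k ≤ m
  · have hA := key1 (m - k + 1) k
    rw [show m - k + 1 + k = m + 1 from by omega,
      show m - k + 1 + 2 * k = m + 1 + k from by omega] at hA
    have hB := key2 (m + 1) k hk1 (by omega)
    rw [show 2 * (m + 1) - 2 = 2 * m from by omega,
      show m + 1 + k - 1 = m + k from by omega,
      show m + 1 - k = m - k + 1 from by omega] at hB
    rw [show m + 1 - k = m - k + 1 from by omega]
    linear_combination
      (-(qint (2 * k) * qint k ^ (2 * s) * X ^ ((s + 1) * (m - k + 1)) *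
          qbinom (2 * (m + 1)) (m + 1 + k))) * hA
      - (qint (2 * k) * qint k ^ (2 * s) * X ^ ((s + 1) * (m - k + 1))) * hB
  · have hk' : k = m + 1 := by omega
    subst hk'
    rw [qbinom_eq_zero (2 * m) (m + (m + 1)) (by omega)]
    rw [Nat.sub_self]
    ring
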